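/- arXiv:2209.14838 — 6 statements merged into one kernel-verified Lean document; each statement's English description precedes it below -/
import Mathlib

section
/- In a nonempty compact Hausdorff semigroup S whose multiplication is continuous in the first coordinate, every minimal left ideal contains an idempotent. -/
/-- A left ideal of a multiplicative structure: a nonempty subset closed under
left multiplication by arbitrary elements. -/
def IsLeftIdeal {S : Type*} [Mul S] (I : Set S) : Prop :=
  I.Nonempty ∧ ∀ s : S, ∀ x ∈ I, s * x ∈ I

/-- A minimal left ideal: a left ideal containing no proper left ideal. -/
def IsMinLeftIdeal {S : Type*} [Mul S] (I : Set S) : Prop :=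
  IsLeftIdeal I ∧ ∀ J ⊆ I, IsLeftIdeal J → J = I

/-- A subset that is a group under the ambient multiplication. -/
def IsGroupSet {S : Type*} [Mul S] (I : Set S) : Prop :=
  (∀ x ∈ I, ∀ y ∈ I, x * y ∈ I) ∧
    ∃ u ∈ I, (∀ x ∈ I, u * x = x ∧ x * u = x) ∧
      ∀ x ∈ I, ∃ y ∈ I, x * y = u ∧ y * x = u

/-- In a nonempty compact Hausdorff semigroup whose multiplication is continuous in the
first coordinate, every minimal left ideal contains an idempotent. -/
theorem minLeftIdeal_exists_idempotent {S : Type*} [Semigroup S] [TopologicalSpace S]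
    [CompactSpace S] [T2Space S] [Nonempty S]
    (hc : ∀ y : S, Continuous fun x => x * y)
    (I : Set S) (hI : IsMinLeftIdeal I) :
    ∃ u ∈ I, u * u = u := by
  obtain ⟨⟨⟨x, hx⟩, hIdeal⟩, hmin⟩ := hI
  -- J = S * x = range (· * x)
  have hJI : Set.range (· * x) ⊆ I := fun a ⟨s, hs⟩ => hs ▸ hIdeal s x hx
  have hJideal : IsLeftIdeal (Set.range (· * x)) := by
    refine ⟨⟨x * x, x, rfl⟩, ?_⟩
    rintro s a ⟨t, rfl⟩
    exact ⟨s * t, mul_assoc s t x⟩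
  have hIJ : Set.range (· * x) = I := hmin _ hJI hJideal
  have hIcompact : IsCompact I := by
    rw [← hIJ, ← Set.image_univ]
    exact isCompact_univ.image (hc x)
  exact exists_idempotent_in_compact_subsemigroup hc I ⟨x, hx⟩ hIcompact
    (fun a ha b hb => hIdeal a b hb)
end

section
/- In a compact Hausdorff left-continuous semigroup S, if I is a minimal left ideal and u ∈ I is an idempotent, then u*I is a group under the semigroup operation, with identity u. -/
/-- In a compact Hausdorff left-continuous semigroup, if $I$ is a minimal left ideal
(closed, nonempty) and $u ∈ I$ is an idempotent, then $u*I$ is a group under the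
semigroup operation with identity $u$. -/
theorem idempotent_smul_minLeftIdeal_isGroup {S : Type*} [Semigroup S] [TopologicalSpace S]
    [CompactSpace S] [T2Space S]
    (hc : ∀ y : S, Continuous fun x => x * y)
    (I : Set S) (hI : IsMinLeftIdeal I) (hIc : IsClosed I)
    (u : S) (hu : u ∈ I) (hid : u * u = u) :
    ((fun x => u * x) '' I ⊆ I) ∧
    (∀ x ∈ (fun x => u * x) '' I, ∀ y ∈ (fun x => u * x) '' I,
        x * y ∈ (fun x => u * x) '' I) ∧
    u ∈ (fun x => u * x) '' I ∧
    (∀ x ∈ (fun x => u * x) '' I, u * x = x ∧ x * u = x) ∧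
    (∀ x ∈ (fun x => u * x) '' I, ∃ y ∈ (fun x => u * x) '' I, x * y = u ∧ y * x = u) := by

  obtain ⟨⟨hne, hmul⟩, hmin⟩ := hI
  -- every z ∈ I satisfies z * u = z
  have hru : ∀ z ∈ I, z * u = z := by
    have hJ : {z | z ∈ I ∧ z * u = z} = I := by
      apply hmin
      · intro z hz; exact hz.1
      · refine ⟨⟨u, hu, hid⟩, ?_⟩
        rintro s z ⟨hz, hzu⟩
        exact ⟨hmul s z hz, by rw [mul_assoc, hzu]⟩
    intro z hz
    rw [← hJ] at hz; exact hz.2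
  have hsolve : ∀ x ∈ I, ∃ s : S, s * x = u := by
    intro x hx
    have hJ : (Set.range fun s => s * x) = I := by
      apply hmin
      · rintro _ ⟨s, rfl⟩; exact hmul s x hx
      · refine ⟨⟨u * x, u, rfl⟩, ?_⟩
        rintro s _ ⟨t, rfl⟩
        exact ⟨s * t, by simp [mul_assoc]⟩
    have hmem : u ∈ Set.range fun s => s * x := hJ ▸ hu
    exact hmem
  have hsub : (fun x => u * x) '' I ⊆ I := by
    rintro _ ⟨a, ha, rfl⟩; exact hmul u a ha
  have hli : ∀ x ∈ (fun x => u * x) '' I, u * x = x := by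
    rintro _ ⟨a, ha, rfl⟩
    show u * (u * a) = u * a
    rw [← mul_assoc, hid]
  have hlinv : ∀ x ∈ (fun x => u * x) '' I,
      ∃ y ∈ (fun x => u * x) '' I, y * x = u := by
    intro x hx
    obtain ⟨s, hs⟩ := hsolve x (hsub hx)
    refine ⟨u * (s * u), ⟨s * u, hmul s u hu, rfl⟩, ?_⟩
    calc u * (s * u) * x = u * (s * (u * x)) := by rw [mul_assoc, mul_assoc]
      _ = u * (s * x) := by rw [hli x hx]
      _ = u * u := by rw [hs]
      _ = u := hid
  refine ⟨hsub, ?_, ⟨u, hu, hid⟩, ?_, ?_⟩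
  · rintro _ ⟨a, ha, rfl⟩ _ ⟨b, hb, rfl⟩
    exact ⟨a * (u * b), hmul a _ (hmul u b hb), by rw [mul_assoc]⟩
  · intro x hx
    exact ⟨hli x hx, hru x (hsub hx)⟩
  · intro x hx
    obtain ⟨y, hy, hyx⟩ := hlinv x hx
    obtain ⟨z, hz, hzy⟩ := hlinv y hy
    have hxy : x * y = u := by
      calc x * y = u * (x * y) := by rw [← mul_assoc, hli x hx]
        _ = z * y * (x * y) := by rw [hzy]
        _ = z * (y * (x * y)) := mul_assoc ..
        _ = z * (y * x * y) := by rw [mul_assoc]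
        _ = z * (u * y) := by rw [hyx]
        _ = z * y := by rw [hli y hy]
        _ = u := hzy
    exact ⟨y, hy, hxy, hyx⟩
end

section
/- In a compact Hausdorff left-continuous semigroup S, if I is a minimal left ideal, then I is the disjoint union of the groups u*I as u ranges over the idempotents of I. -/
/-- In a minimal left ideal, `I * x = I` for every `x ∈ I`. -/
theorem minLeftIdeal_mul_eq {S : Type*} [Semigroup S] {I : Set S} (hI : IsMinLeftIdeal I)
    {x : S} (hx : x ∈ I) : (fun a => a * x) '' I = I := by
  apply hI.2
  · rintro _ ⟨a, ha, rfl⟩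
    exact hI.1.2 a x hx
  · refine ⟨⟨hI.1.1.choose * x, ⟨_, hI.1.1.choose_spec, rfl⟩⟩, ?_⟩
    rintro s _ ⟨a, ha, rfl⟩
    exact ⟨s * a, hI.1.2 s a ha, by dsimp only; rw [mul_assoc]⟩

/-- A minimal left ideal of a compact Hausdorff left-continuous semigroup is the
disjoint union of the groups $u*I$ as $u$ ranges over the idempotents of $I$. -/
theorem minLeftIdeal_disjoint_union_of_groups {S : Type*} [Semigroup S] [TopologicalSpace S]
    [CompactSpace S] [T2Space S]
    (hc : ∀ y : S, Continuous fun x => x * y)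
    (I : Set S) (hI : IsMinLeftIdeal I) :
    (I = ⋃ u ∈ {u ∈ I | u * u = u}, (fun x => u * x) '' I) ∧
    (∀ u ∈ I, u * u = u → ∀ v ∈ I, v * v = v → u ≠ v →
        Disjoint ((fun x => u * x) '' I) ((fun x => v * x) '' I)) := by
  obtain ⟨⟨hne, hideal⟩, hmin⟩ := hI
  -- for z ∈ I and t ∈ I, there is c ∈ I with c * z = t
  have hdiv : ∀ z ∈ I, ∀ t ∈ I, ∃ c ∈ I, c * z = t := by
    intro z hz t ht
    have := minLeftIdeal_mul_eq ⟨⟨hne, hideal⟩, hmin⟩ hz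
    rw [← this] at ht
    obtain ⟨c, hc, hcz⟩ := ht
    exact ⟨c, hc, hcz⟩
  -- u * y = y for y ∈ u*I (u idempotent)
  have hlid : ∀ u : S, u * u = u → ∀ y ∈ (fun x => u * x) '' I, u * y = y := by
    rintro u hu _ ⟨a, _, rfl⟩
    rw [← mul_assoc, hu]
  -- left inverses within u*I
  have hlinv : ∀ u ∈ I, u * u = u → ∀ z ∈ (fun x => u * x) '' I,
      ∃ y ∈ (fun x => u * x) '' I, y * z = u := by
    intro u huI hu z hz
    obtain ⟨a, haI, rfl⟩ := hz
    have hzI : u * a ∈ I := hideal u a haI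
    obtain ⟨c, hcI, hcz⟩ := hdiv (u * a) hzI u huI
    refine ⟨u * c, ⟨c, hcI, rfl⟩, ?_⟩
    rw [mul_assoc, hcz, hu]
  -- right inverses and right identity within u*I
  have hkey : ∀ u ∈ I, u * u = u → ∀ z ∈ (fun x => u * x) '' I,
      (∃ y ∈ (fun x => u * x) '' I, z * y = u) ∧ z * u = z := by
    intro u huI hu z hz
    obtain ⟨y, hy, hyz⟩ := hlinv u huI hu z hz
    obtain ⟨w, _, hwy⟩ := hlinv u huI hu y hy
    have huy : u * y = y := hlid u hu y hy
    have huz : u * z = z := hlid u hu z hz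
    have hzy : z * y = u := by
      calc z * y = (u * z) * y := by rw [huz]
        _ = ((w * y) * z) * y := by rw [hwy]
        _ = w * ((y * z) * y) := by simp only [mul_assoc]
        _ = w * (u * y) := by rw [hyz]
        _ = w * y := by rw [huy]
        _ = u := hwy
    refine ⟨⟨y, hy, hzy⟩, ?_⟩
    calc z * u = z * (y * z) := by rw [hyz]
      _ = (z * y) * z := (mul_assoc z y z).symm
      _ = u * z := by rw [hzy]
      _ = z := huz
  constructor
  · apply Set.Subset.antisymm
    · intro x hx
      -- I = S * x is compact
      have hSx : (fun a => a * x) '' (Set.univ : Set S) = I := by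
        apply hmin
        · rintro _ ⟨a, -, rfl⟩
          exact hideal a x hx
        · refine ⟨⟨x * x, ⟨x, trivial, rfl⟩⟩, ?_⟩
          rintro s _ ⟨a, -, rfl⟩
          exact ⟨s * a, trivial, by dsimp only; rw [mul_assoc]⟩
      have hIcomp : IsCompact I := by
        rw [← hSx]
        exact (isCompact_univ.image (hc x))
      -- T = {a ∈ I | a * x = x} is a compact subsemigroup
      set T : Set S := {a ∈ I | a * x = x} with hT
      have hTne : T.Nonempty := by
        obtain ⟨c, hcI, hcx⟩ := hdiv x hx x hx
        exact ⟨c, hcI, hcx⟩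
      have hTcomp : IsCompact T := by
        have : T = I ∩ (fun a => a * x) ⁻¹' {x} := rfl
        rw [this]
        exact hIcomp.inter_right ((isClosed_singleton).preimage (hc x))
      have hTmul : ∀ a ∈ T, ∀ b ∈ T, a * b ∈ T := by
        rintro a ⟨haI, hax⟩ b ⟨hbI, hbx⟩
        exact ⟨hideal a b hbI, by rw [mul_assoc, hbx, hax]⟩
      obtain ⟨u, ⟨huI, hux⟩, huu⟩ :=
        exists_idempotent_in_compact_subsemigroup hc T hTne hTcomp hTmul
      exact Set.mem_biUnion (show u ∈ {u ∈ I | u * u = u} from ⟨huI, huu⟩) ⟨x, hx, hux⟩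
    · rintro x hx
      simp only [Set.mem_iUnion] at hx
      obtain ⟨u, ⟨_, _⟩, a, haI, rfl⟩ := hx
      exact hideal u a haI
  · intro u huI hu v hvI hv huv
    rw [Set.disjoint_left]
    rintro z hzU hzV
    apply huv
    -- v * z = z
    have hvz : v * z = z := hlid v hv z hzV
    have hzu : z * u = z := (hkey u huI hu z hzU).2
    have hzv : z * v = z := (hkey v hvI hv z hzV).2
    obtain ⟨⟨y, _, hzy⟩, -⟩ := hkey u huI hu z hzU
    -- v * u = u
    have h1 : v * u = u := by
      calc v * u = v * (z * y) := by rw [hzy]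
        _ = (v * z) * y := (mul_assoc v z y).symm
        _ = z * y := by rw [hvz]
        _ = u := hzy
    -- v = v * u
    have hzI : z ∈ I := by obtain ⟨a, haI, ha⟩ := hzU; rw [← ha]; exact hideal u a haI
    obtain ⟨c, hcI, hcz⟩ := hdiv z hzI v hvI
    have h2 : v = v * u := by
      calc v = c * z := hcz.symm
        _ = c * (z * u) := by rw [hzu]
        _ = (c * z) * u := (mul_assoc c z u).symm
        _ = v * u := by rw [hcz]
    rw [h2, h1]
end

section
/- Let S be a left-continuous compact semigroup in which some minimal left ideal I is a group with identity element u. Then the map φ : S → I defined by φ(x) = x*u is a semigroup homomorphism, is continuous, and restricts to the identity on I (i.e., φ is a retraction onto I). -/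
/-- If a minimal left ideal $I$ of a left-continuous compact semigroup is a group with
identity $u$, then $φ(x) = x*u$ is a continuous semigroup homomorphism of $S$ onto $I$
restricting to the identity on $I$ (a retraction onto $I$). -/
theorem retraction_onto_group_minLeftIdeal {S : Type*} [Semigroup S] [TopologicalSpace S]
    [CompactSpace S] [T2Space S]
    (hc : ∀ y : S, Continuous fun x => x * y)
    (I : Set S) (hI : IsMinLeftIdeal I) (hgrp : IsGroupSet I)
    (u : S) (hu : u ∈ I) (hid : ∀ x ∈ I, u * x = x ∧ x * u = x) :
    (∀ x y : S, (x * y) * u = (x * u) * (y * u)) ∧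
    Continuous (fun x : S => x * u) ∧
    (∀ x : S, x * u ∈ I) ∧
    (∀ x ∈ I, x * u = x) := by
  have hmem : ∀ x : S, x * u ∈ I := fun x => hI.1.2 x u hu
  refine ⟨fun x y => ?_, hc u, hmem, fun x hx => (hid x hx).2⟩
  have h1 : y * u = u * (y * u) := ((hid _ (hmem y)).1).symm
  calc (x * y) * u = x * (y * u) := mul_assoc ..
    _ = x * (u * (y * u)) := by rw [← h1]
    _ = (x * u) * (y * u) := (mul_assoc ..).symm
end

section
/- Let S be a left-continuous compact semigroup with a unique minimal left ideal I, and let u be an idempotent in I. Then the map ψ : S → S defined by ψ(x) = u*x is a semigroup homomorphism whose image is exactly the group u*I. -/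
/-- If $I$ is the unique minimal left ideal of a left-continuous compact semigroup $S$
and $u ∈ I$ is an idempotent, then $ψ(x) = u*x$ is a semigroup homomorphism of $S$
whose image is exactly the group $u*I$. -/
theorem left_mul_idempotent_hom_image {S : Type*} [Semigroup S] [TopologicalSpace S]
    [CompactSpace S] [T2Space S]
    (hc : ∀ y : S, Continuous fun x => x * y)
    (I : Set S) (hI : IsMinLeftIdeal I) (huniq : ∀ J : Set S, IsMinLeftIdeal J → J = I)
    (u : S) (hu : u ∈ I) (hid : u * u = u) :
    (∀ x y : S, u * (x * y) = (u * x) * (u * y)) ∧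
    Set.range (fun x : S => u * x) = (fun x => u * x) '' I := by
  obtain ⟨⟨hne, hcl⟩, hmin⟩ := hI
  -- u is a right identity on I
  have hru : ∀ z ∈ I, z * u = z := by
    intro z hz
    have hK : IsLeftIdeal {x ∈ I | x * u = x} :=
      ⟨⟨u, hu, hid⟩, fun s x hx => ⟨hcl s x hx.1, by rw [mul_assoc, hx.2]⟩⟩
    have heq := hmin _ (fun x hx => hx.1) hK
    rw [← heq] at hz
    exact hz.2
  -- I * x is a minimal left ideal, hence equals I
  have hIx : ∀ x : S, (fun z => z * x) '' I = I := by
    intro x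
    refine huniq _ ⟨⟨⟨u * x, u, hu, rfl⟩, ?_⟩, ?_⟩
    · rintro s _ ⟨z, hz, rfl⟩
      exact ⟨s * z, hcl s z hz, by simp only []; rw [mul_assoc]⟩
    · rintro J hJsub ⟨⟨j, hj⟩, hJcl⟩
      obtain ⟨z0, hz0, hz0j⟩ := hJsub hj
      apply Set.Subset.antisymm hJsub
      rintro _ ⟨z, hz, rfl⟩
      have hz0j' : z0 * x ∈ J := by rw [show z0 * x = j from hz0j]; exact hj
      have hK : IsLeftIdeal {w ∈ I | w * x ∈ J} :=
        ⟨⟨z0, hz0, hz0j'⟩, fun s w hw =>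
          ⟨hcl s w hw.1, by rw [mul_assoc]; exact hJcl s _ hw.2⟩⟩
      have heq := hmin _ (fun w hw => hw.1) hK
      rw [← heq] at hz
      exact hz.2
  have hmem : ∀ x : S, u * x ∈ I := fun x => hIx x ▸ ⟨u, hu, rfl⟩
  constructor
  · intro x y
    have : (u * x) * u = u * x := hru _ (hmem x)
    calc u * (x * y) = (u * x) * y := (mul_assoc u x y).symm
      _ = ((u * x) * u) * y := by rw [this]
      _ = (u * x) * (u * y) := mul_assoc _ _ _
  · apply Set.Subset.antisymm
    · rintro _ ⟨x, rfl⟩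
      exact ⟨u * x, hmem x, by simp only []; rw [← mul_assoc, hid]⟩
    · rintro _ ⟨x, _, rfl⟩
      exact ⟨x, rfl⟩
end

section
/- Let G be a group, 𝒜 a G-algebra of subsets of G that is d-closed (closed under all maps d_p for ultrafilters p on 𝒜). Define p*q on the Stone space S(𝒜) of ultrafilters by: A ∈ p*q iff d_q(A) ∈ p. Then * is an associative operation on S(𝒜), and d_{p*q} = d_p ∘ d_q. -/
open Set

/-- Left translate of a set: \$gA = \{g·a : a ∈ A\}\$. -/
def trL {G : Type*} [Group G] (g : G) (A : Set G) : Set G := (fun x => g * x) '' A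

/-- A \$G\$-algebra: a Boolean algebra of subsets of \$G\$ closed under left translation. -/
def IsGAlgebra {G : Type*} [Group G] (𝒜 : Set (Set G)) : Prop :=
  ∅ ∈ 𝒜 ∧ (∀ A ∈ 𝒜, Aᶜ ∈ 𝒜) ∧ (∀ A ∈ 𝒜, ∀ B ∈ 𝒜, A ∪ B ∈ 𝒜) ∧
    ∀ g : G, ∀ A ∈ 𝒜, trL g A ∈ 𝒜

/-- An ultrafilter on the Boolean algebra 𝒜 of subsets of \$G\$. -/
def IsUltra {G : Type*} [Group G] (𝒜 p : Set (Set G)) : Prop :=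
  p ⊆ 𝒜 ∧ ∅ ∉ p ∧ univ ∈ p ∧ (∀ A ∈ p, ∀ B ∈ p, A ∩ B ∈ p) ∧
    (∀ A ∈ p, ∀ B ∈ 𝒜, A ⊆ B → B ∈ p) ∧ ∀ A ∈ 𝒜, A ∈ p ∨ Aᶜ ∈ p

/-- The map \$d_p(A) = \{g ∈ G : g⁻¹A ∈ p\}\$. -/
def dmap {G : Type*} [Group G] (p : Set (Set G)) (A : Set G) : Set G :=
  {g : G | trL g⁻¹ A ∈ p}

/-- 𝒜 is d-closed: closed under \$d_p\$ for every ultrafilter \$p\$ on 𝒜. -/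
def DClosed {G : Type*} [Group G] (𝒜 : Set (Set G)) : Prop :=
  ∀ p : Set (Set G), IsUltra 𝒜 p → ∀ A ∈ 𝒜, dmap p A ∈ 𝒜

/-- The semigroup operation on ultrafilters: \$A ∈ p*q\$ iff \$A ∈ 𝒜\$ and \$d_q(A) ∈ p\$. -/
def ustar {G : Type*} [Group G] (𝒜 p q : Set (Set G)) : Set (Set G) :=
  {A | A ∈ 𝒜 ∧ dmap q A ∈ p}

lemma mem_trL {G : Type*} [Group G] {g : G} {A : Set G} {x : G} :
    x ∈ trL g A ↔ g⁻¹ * x ∈ A := by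
  constructor
  · rintro ⟨a, ha, rfl⟩; simpa
  · intro h; exact ⟨g⁻¹ * x, h, by group⟩

lemma trL_trL {G : Type*} [Group G] (g h : G) (A : Set G) :
    trL g (trL h A) = trL (g * h) A := by
  ext x; simp [mem_trL, mul_assoc]

lemma trL_empty {G : Type*} [Group G] (g : G) : trL g (∅ : Set G) = ∅ := by
  ext x; simp [mem_trL]

lemma trL_univ {G : Type*} [Group G] (g : G) : trL g (univ : Set G) = univ := by
  ext x; simp [mem_trL]

lemma trL_inter {G : Type*} [Group G] (g : G) (A B : Set G) :
    trL g (A ∩ B) = trL g A ∩ trL g B := by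
  ext x; simp [mem_trL]

lemma trL_compl {G : Type*} [Group G] (g : G) (A : Set G) :
    trL g Aᶜ = (trL g A)ᶜ := by
  ext x; simp [mem_trL]

lemma trL_mono {G : Type*} [Group G] (g : G) {A B : Set G} (h : A ⊆ B) :
    trL g A ⊆ trL g B := by
  intro x hx; rw [mem_trL] at *; exact h hx

section Ultra

variable {G : Type*} [Group G] {𝒜 p q : Set (Set G)}

lemma ultra_not_both (hp : IsUltra 𝒜 p) {A : Set G} (hA : A ∈ p) : Aᶜ ∉ p := by
  intro hAc
  have := hp.2.2.2.1 A hA Aᶜ hAc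
  rw [inter_compl_self] at this
  exact hp.2.1 this

lemma ultra_mem_iff (h𝒜 : IsGAlgebra 𝒜) (hp : IsUltra 𝒜 p) {A : Set G} (hA : A ∈ 𝒜) :
    A ∈ p ↔ Aᶜ ∉ p := by
  constructor
  · exact ultra_not_both hp
  · intro h
    rcases hp.2.2.2.2.2 A hA with h' | h'
    · exact h'
    · exact absurd h' h

lemma alg_univ (h𝒜 : IsGAlgebra 𝒜) : (univ : Set G) ∈ 𝒜 := by
  have := h𝒜.2.1 ∅ h𝒜.1
  simpa using this

lemma alg_inter (h𝒜 : IsGAlgebra 𝒜) {A B : Set G} (hA : A ∈ 𝒜) (hB : B ∈ 𝒜) :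
    A ∩ B ∈ 𝒜 := by
  have : A ∩ B = (Aᶜ ∪ Bᶜ)ᶜ := by rw [compl_union, compl_compl, compl_compl]
  rw [this]
  exact h𝒜.2.1 _ (h𝒜.2.2.1 _ (h𝒜.2.1 _ hA) _ (h𝒜.2.1 _ hB))

lemma dmap_empty (hq : IsUltra 𝒜 q) : dmap q (∅ : Set G) = ∅ := by
  ext g
  simp only [dmap, mem_setOf_eq, trL_empty, mem_empty_iff_false, iff_false]
  exact hq.2.1

lemma dmap_univ (hq : IsUltra 𝒜 q) : dmap q (univ : Set G) = univ := by
  ext g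
  simp only [dmap, mem_setOf_eq, trL_univ, mem_univ, iff_true]
  exact hq.2.2.1

lemma dmap_inter (h𝒜 : IsGAlgebra 𝒜) (hq : IsUltra 𝒜 q) {A B : Set G}
    (hA : A ∈ 𝒜) (hB : B ∈ 𝒜) : dmap q (A ∩ B) = dmap q A ∩ dmap q B := by
  ext g
  simp only [dmap, mem_setOf_eq, trL_inter, mem_inter_iff]
  constructor
  · intro h
    exact ⟨hq.2.2.2.2.1 _ h _ (h𝒜.2.2.2 g⁻¹ A hA) inter_subset_left,
      hq.2.2.2.2.1 _ h _ (h𝒜.2.2.2 g⁻¹ B hB) inter_subset_right⟩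
  · rintro ⟨h1, h2⟩
    exact hq.2.2.2.1 _ h1 _ h2

lemma dmap_compl (h𝒜 : IsGAlgebra 𝒜) (hq : IsUltra 𝒜 q) {A : Set G} (hA : A ∈ 𝒜) :
    dmap q Aᶜ = (dmap q A)ᶜ := by
  ext g
  simp only [dmap, mem_setOf_eq, trL_compl, mem_compl_iff]
  rw [ultra_mem_iff h𝒜 hq (h𝒜.2.1 _ (h𝒜.2.2.2 g⁻¹ A hA)), compl_compl]

lemma dmap_trL (hq : IsUltra 𝒜 q) (g : G) (A : Set G) :
    dmap q (trL g A) = trL g (dmap q A) := by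
  ext h
  simp only [dmap, mem_setOf_eq, mem_trL, trL_trL, mul_inv_rev, inv_inv]

lemma dmap_mono (h𝒜 : IsGAlgebra 𝒜) (hq : IsUltra 𝒜 q) {A B : Set G}
    (hB : B ∈ 𝒜) (hAB : A ⊆ B) : dmap q A ⊆ dmap q B := by
  intro g hg
  exact hq.2.2.2.2.1 _ hg _ (h𝒜.2.2.2 g⁻¹ B hB) (trL_mono g⁻¹ hAB)

lemma ustar_ultra (h𝒜 : IsGAlgebra 𝒜) (hd : DClosed 𝒜)
    (hp : IsUltra 𝒜 p) (hq : IsUltra 𝒜 q) : IsUltra 𝒜 (ustar 𝒜 p q) := by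
  refine ⟨fun A hA => hA.1, ?_, ?_, ?_, ?_, ?_⟩
  · rintro ⟨-, h⟩
    rw [dmap_empty hq] at h
    exact hp.2.1 h
  · exact ⟨alg_univ h𝒜, by rw [dmap_univ hq]; exact hp.2.2.1⟩
  · rintro A ⟨hA, hA'⟩ B ⟨hB, hB'⟩
    exact ⟨alg_inter h𝒜 hA hB, by
      rw [dmap_inter h𝒜 hq hA hB]; exact hp.2.2.2.1 _ hA' _ hB'⟩
  · rintro A ⟨hA, hA'⟩ B hB hAB
    exact ⟨hB, hp.2.2.2.2.1 _ hA' _ (hd q hq B hB) (dmap_mono h𝒜 hq hB hAB)⟩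
  · intro A hA
    rcases hp.2.2.2.2.2 (dmap q A) (hd q hq A hA) with h | h
    · exact Or.inl ⟨hA, h⟩
    · exact Or.inr ⟨h𝒜.2.1 A hA, by rw [dmap_compl h𝒜 hq hA]; exact h⟩

lemma dmap_ustar (h𝒜 : IsGAlgebra 𝒜) (hp : IsUltra 𝒜 p) (hq : IsUltra 𝒜 q)
    {A : Set G} (hA : A ∈ 𝒜) :
    dmap (ustar 𝒜 p q) A = dmap p (dmap q A) := by
  ext g
  constructor
  · intro h
    have h2 : trL g⁻¹ A ∈ ustar 𝒜 p q := h
    have h3 := h2.2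
    rw [dmap_trL hq] at h3
    exact h3
  · intro h
    have h' : trL g⁻¹ (dmap q A) ∈ p := h
    rw [← dmap_trL hq] at h'
    show trL g⁻¹ A ∈ ustar 𝒜 p q
    exact ⟨h𝒜.2.2.2 g⁻¹ A hA, h'⟩

end Ultra

/-- On the Stone space of a d-closed $G$-algebra, the operation $p*q$ defined by
$A ∈ p*q ↔ d_q(A) ∈ p$ sends ultrafilters to ultrafilters, is associative, and
satisfies $d_{p*q} = d_p ∘ d_q$. -/
theorem ustar_assoc_and_dmap_comp {G : Type*} [Group G]
    (𝒜 : Set (Set G)) (h𝒜 : IsGAlgebra 𝒜) (hd : DClosed 𝒜)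
    (p q s : Set (Set G)) (hp : IsUltra 𝒜 p) (hq : IsUltra 𝒜 q) (hs : IsUltra 𝒜 s) :
    IsUltra 𝒜 (ustar 𝒜 p q) ∧
    (∀ A ∈ 𝒜, dmap (ustar 𝒜 p q) A = dmap p (dmap q A)) ∧
    ustar 𝒜 (ustar 𝒜 p q) s = ustar 𝒜 p (ustar 𝒜 q s) := by
  refine ⟨ustar_ultra h𝒜 hd hp hq, fun A hA => dmap_ustar h𝒜 hp hq hA, ?_⟩
  ext A
  constructor
  · rintro ⟨hA, hdA, h⟩
    refine ⟨hA, ?_⟩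
    show dmap (ustar 𝒜 q s) A ∈ p
    rw [dmap_ustar h𝒜 hq hs hA]
    exact h
  · rintro ⟨hA, h⟩
    have h' : dmap (ustar 𝒜 q s) A ∈ p := h
    rw [dmap_ustar h𝒜 hq hs hA] at h'
    exact ⟨hA, hd s hs A hA, h'⟩
end
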